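/- Every weight on the quaternion group Q₈ (QuaternionGroup 2 in Mathlib, the dicyclic group of order 8) is 𝒫-equivalent to some gapless weight; that is, every invariant metric on Q₈ is 𝒫-interval. -/
import Mathlib

set_option maxHeartbeats 4000000

/-- The candidate replacement weight on `Q₈`, given class values. -/
def wq (A B C D : ℕ) : QuaternionGroup 2 → ℕ
  | .a i => if i = 0 then 0 else if i = 2 then A else B
  | .xa i => if i = 0 then C else if i = 2 then C else D

set_option synthInstance.maxSize 1000000 in
set_option synthInstance.maxHeartbeats 10000000 in
set_option maxHeartbeats 8000000 in
theorem key_assign : ∀ x < 4, ∀ y < 4, ∀ z < 4, ∀ u < 4, ∃ A < 5, ∃ B < 5, ∃ C < 5, ∃ D < 5,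
    A ≠ 0 ∧ B ≠ 0 ∧ C ≠ 0 ∧ D ≠ 0 ∧
    (A = B ↔ x = y) ∧ (A = C ↔ x = z) ∧ (A = D ↔ x = u) ∧
    (B = C ↔ y = z) ∧ (B = D ↔ y = u) ∧ (C = D ↔ z = u) ∧
    A ≤ 2 * B ∧ A ≤ 2 * C ∧ A ≤ 2 * D ∧
    B ≤ C + D ∧ C ≤ B + D ∧ D ≤ B + C ∧
    (∀ m < 5, (m ≤ A ∨ m ≤ B ∨ m ≤ C ∨ m ≤ D) →
      (m = 0 ∨ m = A ∨ m = B ∨ m = C ∨ m = D)) := by decide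

/-- A weight on a group `G`: vanishes exactly at the identity, is symmetric
under inversion, and satisfies the triangle inequality. -/
def IsWeight {G : Type*} [Group G] (w : G → ℕ) : Prop :=
  (∀ x, w x = 0 ↔ x = 1) ∧ (∀ x, w x⁻¹ = w x) ∧ ∀ x y, w (x * y) ≤ w x + w y

/-- A weight is gapless if its set of values is an initial segment of `ℕ`. -/
def Gapless {G : Type*} (w : G → ℕ) : Prop :=
  ∀ g : G, ∀ m : ℕ, m ≤ w g → ∃ h : G, w h = m

/-- Two weights are `𝒫`-equivalent if they induce the same partition of `G`
into level sets. -/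
def PEquivW {G : Type*} (w w' : G → ℕ) : Prop :=
  ∀ g h : G, w g = w h ↔ w' g = w' h

/-- Every weight on the quaternion group `Q₈` is `𝒫`-equivalent to some
gapless weight; i.e. every invariant metric on `Q₈` is `𝒫`-interval. -/
theorem quaternion_all_weights_pinterval (w : QuaternionGroup 2 → ℕ)
    (hw : IsWeight w) :
    ∃ w' : QuaternionGroup 2 → ℕ, IsWeight w' ∧ Gapless w' ∧ PEquivW w w' := by
  obtain ⟨h0, hinv, htri⟩ := hw
  have cases8 : ∀ g : QuaternionGroup 2, g = .a 0 ∨ g = .a 1 ∨ g = .a 2 ∨ g = .a 3 ∨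
      g = .xa 0 ∨ g = .xa 1 ∨ g = .xa 2 ∨ g = .xa 3 := by decide
  have wa0 : w (QuaternionGroup.a 0) = 0 := (h0 _).2 (by decide)
  have wa3 : w (QuaternionGroup.a 3) = w (QuaternionGroup.a 1) := by
    rw [show (QuaternionGroup.a 3 : QuaternionGroup 2) = (QuaternionGroup.a 1)⁻¹ by decide, hinv]
  have wx2 : w (QuaternionGroup.xa 2) = w (QuaternionGroup.xa 0) := by
    rw [show (QuaternionGroup.xa 2 : QuaternionGroup 2) = (QuaternionGroup.xa 0)⁻¹ by decide, hinv]
  have wx3 : w (QuaternionGroup.xa 3) = w (QuaternionGroup.xa 1) := by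
    rw [show (QuaternionGroup.xa 3 : QuaternionGroup 2) = (QuaternionGroup.xa 1)⁻¹ by decide, hinv]
  have apos : w (QuaternionGroup.a 2) ≠ 0 := fun hh => absurd ((h0 _).1 hh) (by decide)
  have bpos : w (QuaternionGroup.a 1) ≠ 0 := fun hh => absurd ((h0 _).1 hh) (by decide)
  have cpos : w (QuaternionGroup.xa 0) ≠ 0 := fun hh => absurd ((h0 _).1 hh) (by decide)
  have dpos : w (QuaternionGroup.xa 1) ≠ 0 := fun hh => absurd ((h0 _).1 hh) (by decide)
  obtain ⟨A, hA5, B, hB5, C, hC5, D, hD5, hA, hB, hC, hD, hAB, hAC, hAD, hBC, hBD, hCD, i1, i2, i3, i4, i5, i6, hgap⟩ :=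
    key_assign 0 (by omega) (if w (QuaternionGroup.a 1) = w (QuaternionGroup.a 2) then 0 else 1) (by split_ifs <;> omega)
      (if w (QuaternionGroup.xa 0) = w (QuaternionGroup.a 2) then 0 else if w (QuaternionGroup.xa 0) = w (QuaternionGroup.a 1) then 1 else 2) (by split_ifs <;> omega)
      (if w (QuaternionGroup.xa 1) = w (QuaternionGroup.a 2) then 0 else if w (QuaternionGroup.xa 1) = w (QuaternionGroup.a 1) then 1 else if w (QuaternionGroup.xa 1) = w (QuaternionGroup.xa 0) then 2 else 3) (by split_ifs <;> omega)
  have pAB : (A = B) ↔ w (QuaternionGroup.a 2) = w (QuaternionGroup.a 1) := by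
    rw [hAB]; split_ifs <;> simp <;> omega
  have pAC : (A = C) ↔ w (QuaternionGroup.a 2) = w (QuaternionGroup.xa 0) := by
    rw [hAC]; split_ifs <;> simp <;> omega
  have pAD : (A = D) ↔ w (QuaternionGroup.a 2) = w (QuaternionGroup.xa 1) := by
    rw [hAD]; split_ifs <;> simp <;> omega
  have pBC : (B = C) ↔ w (QuaternionGroup.a 1) = w (QuaternionGroup.xa 0) := by
    rw [hBC]; split_ifs <;> simp <;> omega
  have pBD : (B = D) ↔ w (QuaternionGroup.a 1) = w (QuaternionGroup.xa 1) := by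
    rw [hBD]; split_ifs <;> simp <;> omega
  have pCD : (C = D) ↔ w (QuaternionGroup.xa 0) = w (QuaternionGroup.xa 1) := by
    rw [hCD]; split_ifs <;> simp <;> omega
  have hval : ∀ g : QuaternionGroup 2,
      (w g = 0 ∧ wq A B C D g = 0) ∨
      (w g = w (QuaternionGroup.a 2) ∧ wq A B C D g = A) ∨
      (w g = w (QuaternionGroup.a 1) ∧ wq A B C D g = B) ∨
      (w g = w (QuaternionGroup.xa 0) ∧ wq A B C D g = C) ∨
      (w g = w (QuaternionGroup.xa 1) ∧ wq A B C D g = D) := by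
    intro g
    rcases cases8 g with rfl | rfl | rfl | rfl | rfl | rfl | rfl | rfl
    · exact Or.inl ⟨wa0, rfl⟩
    · exact Or.inr (Or.inr (Or.inl ⟨rfl, rfl⟩))
    · exact Or.inr (Or.inl ⟨rfl, rfl⟩)
    · exact Or.inr (Or.inr (Or.inl ⟨wa3, rfl⟩))
    · exact Or.inr (Or.inr (Or.inr (Or.inl ⟨rfl, rfl⟩)))
    · exact Or.inr (Or.inr (Or.inr (Or.inr ⟨rfl, rfl⟩)))
    · exact Or.inr (Or.inr (Or.inr (Or.inl ⟨wx2, rfl⟩)))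
    · exact Or.inr (Or.inr (Or.inr (Or.inr ⟨wx3, rfl⟩)))
  have j1 : A ≤ B + B := by omega
  have j2 : A ≤ C + C := by omega
  have j3 : A ≤ D + D := by omega
  clear hAB hAC hAD hBC hBD hCD i1 i2 i3 htri
  refine ⟨wq A B C D, ⟨?_, ?_, ?_⟩, ?_, ?_⟩
  · intro g
    rcases cases8 g with rfl | rfl | rfl | rfl | rfl | rfl | rfl | rfl
    · exact ⟨fun _ => by decide, fun _ => rfl⟩
    · exact ⟨fun hh => absurd hh hB, fun hh => absurd hh (by decide)⟩
    · exact ⟨fun hh => absurd hh hA, fun hh => absurd hh (by decide)⟩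
    · exact ⟨fun hh => absurd hh hB, fun hh => absurd hh (by decide)⟩
    · exact ⟨fun hh => absurd hh hC, fun hh => absurd hh (by decide)⟩
    · exact ⟨fun hh => absurd hh hD, fun hh => absurd hh (by decide)⟩
    · exact ⟨fun hh => absurd hh hC, fun hh => absurd hh (by decide)⟩
    · exact ⟨fun hh => absurd hh hD, fun hh => absurd hh (by decide)⟩
  · intro g
    rcases cases8 g with rfl | rfl | rfl | rfl | rfl | rfl | rfl | rfl <;> rfl
  · intro g h
    rcases cases8 g with rfl | rfl | rfl | rfl | rfl | rfl | rfl | rfl <;>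
      rcases cases8 h with rfl | rfl | rfl | rfl | rfl | rfl | rfl | rfl
    · show 0 ≤ 0 + 0
      exact Nat.zero_le _
    · show B ≤ 0 + B
      exact Nat.le_add_left _ _
    · show A ≤ 0 + A
      exact Nat.le_add_left _ _
    · show B ≤ 0 + B
      exact Nat.le_add_left _ _
    · show C ≤ 0 + C
      exact Nat.le_add_left _ _
    · show D ≤ 0 + D
      exact Nat.le_add_left _ _
    · show C ≤ 0 + C
      exact Nat.le_add_left _ _
    · show D ≤ 0 + D
      exact Nat.le_add_left _ _
    · show B ≤ B + 0
      exact Nat.le_add_right _ _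
    · show A ≤ B + B
      exact j1
    · show B ≤ B + A
      exact Nat.le_add_right _ _
    · show 0 ≤ B + B
      exact Nat.zero_le _
    · show D ≤ B + C
      exact i6
    · show C ≤ B + D
      exact i5
    · show D ≤ B + C
      exact i6
    · show C ≤ B + D
      exact i5
    · show A ≤ A + 0
      exact Nat.le_add_right _ _
    · show B ≤ A + B
      exact Nat.le_add_left _ _
    · show 0 ≤ A + A
      exact Nat.zero_le _
    · show B ≤ A + B
      exact Nat.le_add_left _ _
    · show C ≤ A + C
      exact Nat.le_add_left _ _
    · show D ≤ A + D
      exact Nat.le_add_left _ _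
    · show C ≤ A + C
      exact Nat.le_add_left _ _
    · show D ≤ A + D
      exact Nat.le_add_left _ _
    · show B ≤ B + 0
      exact Nat.le_add_right _ _
    · show 0 ≤ B + B
      exact Nat.zero_le _
    · show B ≤ B + A
      exact Nat.le_add_right _ _
    · show A ≤ B + B
      exact j1
    · show D ≤ B + C
      exact i6
    · show C ≤ B + D
      exact i5
    · show D ≤ B + C
      exact i6
    · show C ≤ B + D
      exact i5
    · show C ≤ C + 0
      exact Nat.le_add_right _ _
    · show D ≤ C + B
      exact by omega
    · show C ≤ C + A
      exact Nat.le_add_right _ _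
    · show D ≤ C + B
      exact by omega
    · show A ≤ C + C
      exact j2
    · show B ≤ C + D
      exact i4
    · show 0 ≤ C + C
      exact Nat.zero_le _
    · show B ≤ C + D
      exact i4
    · show D ≤ D + 0
      exact Nat.le_add_right _ _
    · show C ≤ D + B
      exact by omega
    · show D ≤ D + A
      exact Nat.le_add_right _ _
    · show C ≤ D + B
      exact by omega
    · show B ≤ D + C
      exact by omega
    · show A ≤ D + D
      exact j3
    · show B ≤ D + C
      exact by omega
    · show 0 ≤ D + D
      exact Nat.zero_le _
    · show C ≤ C + 0
      exact Nat.le_add_right _ _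
    · show D ≤ C + B
      exact by omega
    · show C ≤ C + A
      exact Nat.le_add_right _ _
    · show D ≤ C + B
      exact by omega
    · show 0 ≤ C + C
      exact Nat.zero_le _
    · show B ≤ C + D
      exact i4
    · show A ≤ C + C
      exact j2
    · show B ≤ C + D
      exact i4
    · show D ≤ D + 0
      exact Nat.le_add_right _ _
    · show C ≤ D + B
      exact by omega
    · show D ≤ D + A
      exact Nat.le_add_right _ _
    · show C ≤ D + B
      exact by omega
    · show B ≤ D + C
      exact by omega
    · show 0 ≤ D + D
      exact Nat.zero_le _
    · show B ≤ D + C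
      exact by omega
    · show A ≤ D + D
      exact j3
  · intro g m hm
    have hm' : m = 0 ∨ m ≤ A ∨ m ≤ B ∨ m ≤ C ∨ m ≤ D := by
      rcases hval g with ⟨_, h2⟩ | ⟨_, h2⟩ | ⟨_, h2⟩ | ⟨_, h2⟩ | ⟨_, h2⟩ <;> rw [h2] at hm <;> omega
    have hm5 : m < 5 := by omega
    rcases hm' with h | h | h | h | h
    · exact ⟨QuaternionGroup.a 0, h.symm⟩
    · rcases hgap m hm5 (Or.inl h) with h' | h' | h' | h' | h'
      · exact ⟨QuaternionGroup.a 0, h'.symm⟩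
      · exact ⟨QuaternionGroup.a 2, h'.symm⟩
      · exact ⟨QuaternionGroup.a 1, h'.symm⟩
      · exact ⟨QuaternionGroup.xa 0, h'.symm⟩
      · exact ⟨QuaternionGroup.xa 1, h'.symm⟩
    · rcases hgap m hm5 (Or.inr (Or.inl h)) with h' | h' | h' | h' | h'
      · exact ⟨QuaternionGroup.a 0, h'.symm⟩
      · exact ⟨QuaternionGroup.a 2, h'.symm⟩
      · exact ⟨QuaternionGroup.a 1, h'.symm⟩
      · exact ⟨QuaternionGroup.xa 0, h'.symm⟩
      · exact ⟨QuaternionGroup.xa 1, h'.symm⟩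
    · rcases hgap m hm5 (Or.inr (Or.inr (Or.inl h))) with h' | h' | h' | h' | h'
      · exact ⟨QuaternionGroup.a 0, h'.symm⟩
      · exact ⟨QuaternionGroup.a 2, h'.symm⟩
      · exact ⟨QuaternionGroup.a 1, h'.symm⟩
      · exact ⟨QuaternionGroup.xa 0, h'.symm⟩
      · exact ⟨QuaternionGroup.xa 1, h'.symm⟩
    · rcases hgap m hm5 (Or.inr (Or.inr (Or.inr h))) with h' | h' | h' | h' | h'
      · exact ⟨QuaternionGroup.a 0, h'.symm⟩
      · exact ⟨QuaternionGroup.a 2, h'.symm⟩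
      · exact ⟨QuaternionGroup.a 1, h'.symm⟩
      · exact ⟨QuaternionGroup.xa 0, h'.symm⟩
      · exact ⟨QuaternionGroup.xa 1, h'.symm⟩
  · intro g h
    rcases hval g with ⟨hg1, hg2⟩ | ⟨hg1, hg2⟩ | ⟨hg1, hg2⟩ | ⟨hg1, hg2⟩ | ⟨hg1, hg2⟩ <;>
      rcases hval h with ⟨hh1, hh2⟩ | ⟨hh1, hh2⟩ | ⟨hh1, hh2⟩ | ⟨hh1, hh2⟩ | ⟨hh1, hh2⟩ <;>
      rw [hg1, hg2, hh1, hh2]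
    · exact iff_of_false (fun hh => apos hh.symm) (fun hh => hA hh.symm)
    · exact iff_of_false (fun hh => bpos hh.symm) (fun hh => hB hh.symm)
    · exact iff_of_false (fun hh => cpos hh.symm) (fun hh => hC hh.symm)
    · exact iff_of_false (fun hh => dpos hh.symm) (fun hh => hD hh.symm)
    · exact iff_of_false (fun hh => apos hh) (fun hh => hA hh)
    · exact iff_of_true rfl rfl
    · exact pAB.symm
    · exact pAC.symm
    · exact pAD.symm
    · exact iff_of_false (fun hh => bpos hh) (fun hh => hB hh)
    · exact ⟨fun hh => (pAB.mpr hh.symm).symm, fun hh => (pAB.mp hh.symm).symm⟩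
    · exact iff_of_true rfl rfl
    · exact pBC.symm
    · exact pBD.symm
    · exact iff_of_false (fun hh => cpos hh) (fun hh => hC hh)
    · exact ⟨fun hh => (pAC.mpr hh.symm).symm, fun hh => (pAC.mp hh.symm).symm⟩
    · exact ⟨fun hh => (pBC.mpr hh.symm).symm, fun hh => (pBC.mp hh.symm).symm⟩
    · exact iff_of_true rfl rfl
    · exact pCD.symm
    · exact iff_of_false (fun hh => dpos hh) (fun hh => hD hh)
    · exact ⟨fun hh => (pAD.mpr hh.symm).symm, fun hh => (pAD.mp hh.symm).symm⟩
    · exact ⟨fun hh => (pBD.mpr hh.symm).symm, fun hh => (pBD.mp hh.symm).symm⟩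
    · exact ⟨fun hh => (pCD.mpr hh.symm).symm, fun hh => (pCD.mp hh.symm).symm⟩
    · exact iff_of_true rfl rfl
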